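/- The Read–Bajraktarević operator T : C* → C** defined by Tg = h + S·(g∘L − b∘L) is well defined (Tg is continuous and interpolates all the data points) and satisfies d_∞(Tg₁, Tg₂) ≤ s·d_∞(g₁, g₂) for all g₁, g₂ ∈ C*, where s = max{|S(x)| : x ∈ I}. In particular, if s < 1 then T has a unique fixed point f, and f ∈ C**, i.e., f interpolates the data. -/

import Mathlib

open Set
open Filter Topology

/-- A continuous injection on `[a,c]` mapping onto `[p,q]` sends only endpoints to
endpoint values. -/
lemma rb_aux_endpoint {a c p q : ℝ} {f : ℝ → ℝ} (hac : a ≤ c)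
    (hc : ContinuousOn f (Icc a c)) (hbij : Set.BijOn f (Icc a c) (Icc p q))
    {y : ℝ} (hy : y ∈ Icc a c) (hfy : f y = p ∨ f y = q) : y = a ∨ y = c := by
  have hinj := hbij.injOn
  have hmt := hbij.mapsTo
  have hfa := hmt (left_mem_Icc.2 hac)
  have hfc := hmt (right_mem_Icc.2 hac)
  rcases hc.strictMonoOn_of_injOn_Icc' hac hinj with hm | hm
  · rcases hfy with hfy | hfy
    · left; by_contra hya
      have : f a < f y := hm (left_mem_Icc.2 hac) hy (lt_of_le_of_ne hy.1 (Ne.symm hya))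
      have := hfa.1
      linarith [hfy ▸ ‹f a < f y›]
    · right; by_contra hyc
      have : f y < f c := hm hy (right_mem_Icc.2 hac) (lt_of_le_of_ne hy.2 hyc)
      have := hfc.2
      linarith [hfy ▸ ‹f y < f c›]
  · rcases hfy with hfy | hfy
    · right; by_contra hyc
      have : f c < f y := hm hy (right_mem_Icc.2 hac) (lt_of_le_of_ne hy.2 hyc)
      have := hfc.1
      linarith [hfy ▸ ‹f c < f y›]
    · left; by_contra hya
      have : f y < f a := hm (left_mem_Icc.2 hac) hy (lt_of_le_of_ne hy.1 (Ne.symm hya))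
      have := hfa.2
      linarith [hfy ▸ ‹f y < f a›]

/-- A continuous bijection `f : [a,c] → [p,q]` has a globally defined continuous
right inverse taking values in `[a,c]`. -/
lemma rb_aux_inv {a c p q : ℝ} {f : ℝ → ℝ} (hac : a ≤ c) (hpq : p ≤ q)
    (hc : ContinuousOn f (Icc a c)) (hbij : Set.BijOn f (Icc a c) (Icc p q)) :
    ∃ g : ℝ → ℝ, Continuous g ∧ (∀ x, g x ∈ Icc a c) ∧ ∀ x ∈ Icc p q, f (g x) = x := by
  let e : (Icc a c : Set ℝ) ≃ (Icc p q : Set ℝ) := hbij.equiv f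
  have hce : Continuous e := by
    have h1 : Continuous ((Icc a c).restrict f) := hc.restrict
    exact Continuous.subtype_mk h1 _
  let E := Continuous.homeoOfEquivCompactToT2 (f := e) hce
  refine ⟨fun x => (E.symm (projIcc p q hpq x) : ℝ), ?_, ?_, ?_⟩
  · exact continuous_subtype_val.comp (E.symm.continuous.comp continuous_projIcc)
  · exact fun x => (E.symm (projIcc p q hpq x)).2
  · intro x hx
    have h1 : e (E.symm ⟨x, hx⟩) = ⟨x, hx⟩ := E.apply_symm_apply _
    simp only [projIcc_of_mem hpq hx]
    exact congrArg Subtype.val h1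

/-- Continuity of `S * ψ` at a point where `ψ` vanishes, given only boundedness of `S`. -/
lemma rb_aux_cwa_zero {a c s e : ℝ} {S ψ : ℝ → ℝ} (hψe : ψ e = 0)
    (hψ : ContinuousWithinAt ψ (Icc a c) e)
    (hSb : ∀ x ∈ Icc a c, |S x| ≤ s) :
    ContinuousWithinAt (fun x => S x * ψ x) (Icc a c) e := by
  have h0 : Tendsto (fun x => S x * ψ x) (𝓝[Icc a c] e) (𝓝 0) := by
    apply squeeze_zero_norm' (a := fun x => s * |ψ x|)
    · filter_upwards [self_mem_nhdsWithin] with x hx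
      rw [Real.norm_eq_abs, abs_mul]
      exact mul_le_mul_of_nonneg_right (hSb x hx) (abs_nonneg _)
    · have h1 : Tendsto (fun x => s * |ψ x|) (𝓝[Icc a c] e) (𝓝 (s * |ψ e|)) :=
        (hψ.abs).const_mul s
      rwa [hψe, abs_zero, mul_zero] at h1
  have h2 : S e * ψ e = 0 := by rw [hψe, mul_zero]
  unfold ContinuousWithinAt
  rw [show (fun x => S x * ψ x) e = 0 from h2]
  exact h0

/-- Product rule for continuity on a closed interval where `ψ` vanishes at both
endpoints and `S` is only continuous in the interior. -/
lemma rb_aux_prod_cont {a c s : ℝ} {S ψ : ℝ → ℝ} (hac : a ≤ c)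
    (hψ : ContinuousOn ψ (Icc a c)) (hψa : ψ a = 0) (hψc : ψ c = 0)
    (hSb : ∀ x ∈ Icc a c, |S x| ≤ s)
    (hSc : ∀ x ∈ Ioo a c, ContinuousWithinAt S (Icc a c) x) :
    ContinuousOn (fun x => S x * ψ x) (Icc a c) := by
  intro x hx
  rcases eq_or_ne x a with rfl | hxa
  · exact rb_aux_cwa_zero hψa (hψ x hx) hSb
  rcases eq_or_ne x c with rfl | hxc
  · exact rb_aux_cwa_zero hψc (hψ x hx) hSb
  · exact (hSc x ⟨lt_of_le_of_ne hx.1 (Ne.symm hxa), lt_of_le_of_ne hx.2 hxc⟩).mul (hψ x hx)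

/-- Gluing continuity over a union of two closed sets. -/
lemma rb_aux_union_closed {α : Type*} [TopologicalSpace α] {f : α → ℝ} {s t : Set α}
    (hs : IsClosed s) (ht : IsClosed t)
    (h1 : ContinuousOn f s) (h2 : ContinuousOn f t) : ContinuousOn f (s ∪ t) := by
  intro x hx
  have Hs : ContinuousWithinAt f s x := by
    by_cases h : x ∈ s
    · exact h1 x h
    · exact continuousWithinAt_of_notMem_closure (by rwa [hs.closure_eq])
  have Ht : ContinuousWithinAt f t x := by
    by_cases h : x ∈ t
    · exact h2 x h
    · exact continuousWithinAt_of_notMem_closure (by rwa [ht.closure_eq])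
  exact Hs.union Ht


/-- The Read–Bajraktarević operator `Tg = h + S · (g ∘ L − b ∘ L)`. -/
def RBop (S L b h : ℝ → ℝ) (g : ℝ → ℝ) : ℝ → ℝ :=
  fun x => h x + S x * (g (L x) - b (L x))

/-- The sup-distance `d_∞(g₁, g₂) = max {|g₁ x − g₂ x| : x ∈ [a, c]}`. -/
noncomputable def dInf (a c : ℝ) (g₁ g₂ : ℝ → ℝ) : ℝ :=
  sSup ((fun x => |g₁ x - g₂ x|) '' Set.Icc a c)

/-- The Read–Bajraktarević operator `T : C* → C**`,
`Tg = h + S·(g∘L − b∘L)`, is well defined (`Tg` is continuous and interpolates all the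
data points) and satisfies `d_∞(Tg₁, Tg₂) ≤ s·d_∞(g₁, g₂)` for all `g₁, g₂ ∈ C*`, where
`s = max {|S(x)| : x ∈ I}`.  In particular, if `s < 1` then `T` has a unique fixed point
`f`, and `f ∈ C**`, i.e. `f` interpolates the data. -/
theorem read_bajraktarevic_operator
    (N : ℕ) (hN : 0 < N) (X Y : ℕ → ℝ)
    (hX : ∀ j, j < N → X j < X (j + 1))
    -- the maps `l n : I → [X (n-1), X n]` are continuous bijections
    (l : ℕ → ℝ → ℝ)
    (hl : ∀ n, 1 ≤ n → n ≤ N → ContinuousOn (l n) (Icc (X 0) (X N)) ∧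
      Set.BijOn (l n) (Icc (X 0) (X N)) (Icc (X (n - 1)) (X n)))
    -- `L = l_n⁻¹` on `[X (n-1), X n)`, with `L (X N) = l_N⁻¹ (X N)`
    (L : ℝ → ℝ)
    (hLI : Set.MapsTo L (Icc (X 0) (X N)) (Icc (X 0) (X N)))
    (hL : ∀ n, 1 ≤ n → n ≤ N → ∀ x ∈ Ico (X (n - 1)) (X n), l n (L x) = x)
    (hLN : l N (L (X N)) = X N)
    -- `S` is bounded, with `s = max {|S x| : x ∈ I}`, and piecewise continuous with
    -- the only possible discontinuities at the interior knots
    (S : ℝ → ℝ) (s : ℝ)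
    (hS : IsGreatest ((fun x => |S x|) '' Icc (X 0) (X N)) s)
    (hScont : ContinuousOn S (Icc (X 0) (X N) \ (X '' {j | 1 ≤ j ∧ j < N})))
    -- `b ∈ C*` and `h ∈ C**`
    (b h : ℝ → ℝ)
    (hbC : ContinuousOn b (Icc (X 0) (X N)))
    (hb0 : b (X 0) = Y 0) (hbN : b (X N) = Y N)
    (hhC : ContinuousOn h (Icc (X 0) (X N)))
    (hh : ∀ j ≤ N, h (X j) = Y j) :
    -- `T` is well defined: `Tg ∈ C**` for every `g ∈ C*`
    (∀ g : ℝ → ℝ, ContinuousOn g (Icc (X 0) (X N)) → g (X 0) = Y 0 → g (X N) = Y N →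
      ContinuousOn (RBop S L b h g) (Icc (X 0) (X N)) ∧
        ∀ j ≤ N, RBop S L b h g (X j) = Y j) ∧
    -- `T` contracts `d_∞` by the factor `s`
    (∀ g₁ g₂ : ℝ → ℝ,
      ContinuousOn g₁ (Icc (X 0) (X N)) → g₁ (X 0) = Y 0 → g₁ (X N) = Y N →
      ContinuousOn g₂ (Icc (X 0) (X N)) → g₂ (X 0) = Y 0 → g₂ (X N) = Y N →
      dInf (X 0) (X N) (RBop S L b h g₁) (RBop S L b h g₂) ≤ s * dInf (X 0) (X N) g₁ g₂) ∧
    -- if `s < 1`, `T` has a unique fixed point in `C*`, which lies in `C**`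
    (s < 1 → ∃ f : ℝ → ℝ,
      (ContinuousOn f (Icc (X 0) (X N)) ∧ (∀ j ≤ N, f (X j) = Y j) ∧
        ∀ x ∈ Icc (X 0) (X N), RBop S L b h f x = f x) ∧
      ∀ g : ℝ → ℝ, ContinuousOn g (Icc (X 0) (X N)) → g (X 0) = Y 0 → g (X N) = Y N →
        (∀ x ∈ Icc (X 0) (X N), RBop S L b h g x = g x) →
        Set.EqOn g f (Icc (X 0) (X N))) := by
  
  have hmonoX : ∀ j k : ℕ, j ≤ k → k ≤ N → X j ≤ X k := by
    intro j k hjk hkN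
    induction k with
    | zero => rw [Nat.le_zero.mp hjk]
    | succ n ih =>
      rcases Nat.lt_or_ge j (n + 1) with hc | hc
      · exact le_trans (ih (Nat.lt_succ_iff.mp hc) (le_trans (Nat.le_succ n) hkN))
          (hX n (Nat.lt_of_succ_le hkN)).le
      · rw [le_antisymm hjk hc]
  have hac : X 0 ≤ X N := hmonoX 0 N (Nat.zero_le N) le_rfl
  have hXmem : ∀ j, j ≤ N → X j ∈ Icc (X 0) (X N) := fun j hj =>
    ⟨hmonoX 0 j (Nat.zero_le j) hj, hmonoX j N hj le_rfl⟩
  have hsubI : ∀ n, 1 ≤ n → n ≤ N → Icc (X (n - 1)) (X n) ⊆ Icc (X 0) (X N) := by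
    intro n h1 h2
    exact Icc_subset_Icc (hmonoX 0 (n - 1) (Nat.zero_le _) (le_trans (Nat.sub_le n 1) h2))
      (hmonoX n N h2 le_rfl)
  have hpq : ∀ n, 1 ≤ n → n ≤ N → X (n - 1) ≤ X n := fun n h1 h2 =>
    hmonoX (n - 1) n (Nat.sub_le n 1) h2
  have hknot : ∀ n, 1 ≤ n → n ≤ N → ∀ x ∈ Ioo (X (n - 1)) (X n),
      x ∈ Icc (X 0) (X N) \ (X '' {j | 1 ≤ j ∧ j < N}) := by
    intro n h1 h2 x hx
    refine ⟨⟨le_trans (hXmem (n - 1) (le_trans (Nat.sub_le n 1) h2)).1 hx.1.le,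
      le_trans hx.2.le (hmonoX n N h2 le_rfl)⟩, ?_⟩
    rintro ⟨j, ⟨hj1, hjN⟩, rfl⟩
    rcases le_or_gt j (n - 1) with hle | hlt
    · exact absurd (hmonoX j (n - 1) hle (le_trans (Nat.sub_le n 1) h2)) (not_le.mpr hx.1)
    · have hnj : n ≤ j := by omega
      exact absurd (hmonoX n j hnj hjN.le) (not_le.mpr hx.2)
  have hend : ∀ n, 1 ≤ n → n ≤ N → ∀ y ∈ Icc (X 0) (X N),
      (l n y = X (n - 1) ∨ l n y = X n) → y = X 0 ∨ y = X N := by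
    intro n h1 h2 y hy hfy
    exact rb_aux_endpoint hac (hl n h1 h2).1 (hl n h1 h2).2 hy hfy
  -- Part 1
  have part1 : ∀ g : ℝ → ℝ, ContinuousOn g (Icc (X 0) (X N)) → g (X 0) = Y 0 → g (X N) = Y N →
      ContinuousOn (RBop S L b h g) (Icc (X 0) (X N)) ∧
        ∀ j ≤ N, RBop S L b h g (X j) = Y j := by
    intro g hgC hg0 hgN
    have hgb : ∀ y, y = X 0 ∨ y = X N → g y - b y = 0 := by
      rintro y (rfl | rfl)
      · rw [hg0, hb0, sub_self]
      · rw [hgN, hbN, sub_self]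
    have hdiff0 : ∀ j, j ≤ N → g (L (X j)) - b (L (X j)) = 0 := by
      intro j hj
      rcases Nat.lt_or_ge j N with hjN | hge
      · have hmem : X j ∈ Ico (X (j + 1 - 1)) (X (j + 1)) := by
          simp only [Nat.add_sub_cancel]
          exact ⟨le_rfl, hX j hjN⟩
        have heq : l (j + 1) (L (X j)) = X (j + 1 - 1) := by
          rw [hL (j + 1) (Nat.le_add_left 1 j) (Nat.succ_le_of_lt hjN) (X j) hmem]
          simp only [Nat.add_sub_cancel]
        exact hgb _ (hend (j + 1) (Nat.le_add_left 1 j) (Nat.succ_le_of_lt hjN) _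
          (hLI (hXmem j hj)) (Or.inl heq))
      · have hjN : j = N := le_antisymm hj hge
        rw [hjN]
        exact hgb _ (hend N hN le_rfl _ (hLI (hXmem N le_rfl)) (Or.inr hLN))
    have hpiece : ∀ n, 1 ≤ n → n ≤ N →
        ContinuousOn (fun x => S x * (g (L x) - b (L x))) (Icc (X (n - 1)) (X n)) := by
      intro n h1 h2
      have hpqn : X (n - 1) ≤ X n := hpq n h1 h2
      obtain ⟨e, hec, hemem, heinv⟩ := rb_aux_inv hac hpqn (hl n h1 h2).1 (hl n h1 h2).2
      have heend : ∀ x ∈ Icc (X (n - 1)) (X n), (x = X (n - 1) ∨ x = X n) →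
          g (e x) - b (e x) = 0 := by
        intro x hx hcase
        refine hgb _ (hend n h1 h2 _ (hemem x) ?_)
        rcases hcase with rfl | rfl
        · exact Or.inl (heinv _ hx)
        · exact Or.inr (heinv _ hx)
      have hψC : ContinuousOn (fun x => g (e x) - b (e x)) (Icc (X (n - 1)) (X n)) :=
        (hgC.sub hbC).comp hec.continuousOn (fun x _ => hemem x)
      have hφnC : ContinuousOn (fun x => S x * (g (e x) - b (e x)))
          (Icc (X (n - 1)) (X n)) := by
        apply rb_aux_prod_cont hpqn hψC
        · exact heend _ (left_mem_Icc.2 hpqn) (Or.inl rfl)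
        · exact heend _ (right_mem_Icc.2 hpqn) (Or.inr rfl)
        · exact fun x hx => hS.2 ⟨x, hsubI n h1 h2 hx, rfl⟩
        · intro x hx
          have h3 := hScont x (hknot n h1 h2 x hx)
          have h4 : ContinuousWithinAt S (Icc (X (n - 1)) (X n) ∩ Ioo (X (n - 1)) (X n)) x :=
            h3.mono (fun y hy => hknot n h1 h2 y hy.2)
          exact (continuousWithinAt_inter (Ioo_mem_nhds hx.1 hx.2)).mp h4
      apply hφnC.congr
      intro x hx
      show S x * (g (L x) - b (L x)) = S x * (g (e x) - b (e x))
      rcases lt_or_eq_of_le hx.2 with hlt | hxeq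
      · have hxI : x ∈ Icc (X 0) (X N) := hsubI n h1 h2 hx
        have hLx : L x = e x := by
          apply (hl n h1 h2).2.injOn (hLI hxI) (hemem x)
          rw [hL n h1 h2 x ⟨hx.1, hlt⟩, heinv x hx]
        simp only [hLx]
      · rcases Nat.lt_or_ge n N with hnN | hge
        · have hz1 : g (L x) - b (L x) = 0 := by rw [hxeq]; exact hdiff0 n h2
          have hz2 : g (e x) - b (e x) = 0 := by
            rw [hxeq]; exact heend (X n) (right_mem_Icc.2 hpqn) (Or.inr rfl)
          rw [hz1, hz2]
        · have hnN : n = N := le_antisymm h2 hge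
          have hLx : L x = e x := by
            apply (hl n h1 h2).2.injOn (hLI (hsubI n h1 h2 hx)) (hemem x)
            have hi := heinv x hx
            rw [hxeq, hnN] at hi ⊢
            rw [hLN, hi]
          simp only [hLx]
    have hglue : ∀ n, 1 ≤ n → n ≤ N →
        ContinuousOn (fun x => S x * (g (L x) - b (L x))) (Icc (X 0) (X n)) := by
      intro n
      induction n with
      | zero => intro hcon; exact absurd hcon (by norm_num)
      | succ m ih =>
        intro _ hmN
        rcases Nat.eq_zero_or_pos m with rfl | hm
        · exact hpiece 1 le_rfl hmN
        · have hA := ih hm (le_trans (Nat.le_succ m) hmN)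
          have hB := hpiece (m + 1) (Nat.le_add_left 1 m) hmN
          rw [Nat.add_sub_cancel] at hB
          have hU := rb_aux_union_closed isClosed_Icc isClosed_Icc hA hB
          rwa [Icc_union_Icc_eq_Icc (hmonoX 0 m (Nat.zero_le m) (le_trans (Nat.le_succ m) hmN))
            (hX m (Nat.lt_of_succ_le hmN)).le] at hU
    have hφC : ContinuousOn (fun x => S x * (g (L x) - b (L x))) (Icc (X 0) (X N)) :=
      hglue N hN le_rfl
    constructor
    · show ContinuousOn (fun x => h x + S x * (g (L x) - b (L x))) (Icc (X 0) (X N))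
      exact hhC.add hφC
    · intro j hj
      simp only [RBop]
      rw [hdiff0 j hj, mul_zero, add_zero]
      exact hh j hj
  have hs0 : 0 ≤ s := by
    obtain ⟨x, _, hxe⟩ := hS.1
    rw [← hxe]; exact abs_nonneg _
  -- Part 2
  have part2 : ∀ g₁ g₂ : ℝ → ℝ,
      ContinuousOn g₁ (Icc (X 0) (X N)) → g₁ (X 0) = Y 0 → g₁ (X N) = Y N →
      ContinuousOn g₂ (Icc (X 0) (X N)) → g₂ (X 0) = Y 0 → g₂ (X N) = Y N →
      dInf (X 0) (X N) (RBop S L b h g₁) (RBop S L b h g₂) ≤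
        s * dInf (X 0) (X N) g₁ g₂ := by
    intro g₁ g₂ h1C _ _ h2C _ _
    have hbdd : BddAbove ((fun x => |g₁ x - g₂ x|) '' Icc (X 0) (X N)) :=
      (isCompact_Icc.image_of_continuousOn ((h1C.sub h2C).abs)).bddAbove
    have hd0 : 0 ≤ dInf (X 0) (X N) g₁ g₂ :=
      le_trans (abs_nonneg _) (le_csSup hbdd ⟨X 0, left_mem_Icc.2 hac, rfl⟩)
    simp only [dInf]
    apply Real.sSup_le
    · rintro v ⟨x, hx, rfl⟩
      have hLx := hLI hx
      show |RBop S L b h g₁ x - RBop S L b h g₂ x| ≤ s * dInf (X 0) (X N) g₁ g₂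
      have h1 : RBop S L b h g₁ x - RBop S L b h g₂ x
          = S x * (g₁ (L x) - g₂ (L x)) := by simp only [RBop]; ring
      rw [h1, abs_mul]
      have h2 : |g₁ (L x) - g₂ (L x)| ≤ dInf (X 0) (X N) g₁ g₂ :=
        le_csSup hbdd ⟨L x, hLx, rfl⟩
      exact mul_le_mul (hS.2 ⟨x, hx, rfl⟩) h2 (abs_nonneg _) hs0
    · exact mul_nonneg hs0 hd0
  refine ⟨part1, part2, ?_⟩
  -- Part 3
  intro hs1
  haveI : CompactSpace (Icc (X 0) (X N) : Set ℝ) := isCompact_iff_compactSpace.mp isCompact_Icc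
  set p0 : (Icc (X 0) (X N) : Set ℝ) := ⟨X 0, left_mem_Icc.2 hac⟩ with hp0
  set pN : (Icc (X 0) (X N) : Set ℝ) := ⟨X N, right_mem_Icc.2 hac⟩ with hpN
  let P := {u : C((Icc (X 0) (X N) : Set ℝ), ℝ) // u p0 = Y 0 ∧ u pN = Y N}
  have hclosed : IsClosed {u : C((Icc (X 0) (X N) : Set ℝ), ℝ) | u p0 = Y 0 ∧ u pN = Y N} := by
    have c1 : IsClosed {u : C((Icc (X 0) (X N) : Set ℝ), ℝ) | u p0 = Y 0} :=
      isClosed_eq (continuous_eval_const p0) continuous_const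
    have c2 : IsClosed {u : C((Icc (X 0) (X N) : Set ℝ), ℝ) | u pN = Y N} :=
      isClosed_eq (continuous_eval_const pN) continuous_const
    exact c1.inter c2
  haveI : CompleteSpace P := (hclosed.isComplete).completeSpace_coe
  haveI : Nonempty P := ⟨⟨⟨fun z => b z, hbC.restrict⟩, hb0, hbN⟩⟩
  have hext : ∀ u : P, ContinuousOn (IccExtend hac ⇑u.1) (Icc (X 0) (X N)) ∧
      IccExtend hac ⇑u.1 (X 0) = Y 0 ∧ IccExtend hac ⇑u.1 (X N) = Y N := by
    intro u
    refine ⟨(u.1.continuous.Icc_extend').continuousOn, ?_, ?_⟩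
    · rw [IccExtend_of_mem hac _ (left_mem_Icc.2 hac)]; exact u.2.1
    · rw [IccExtend_of_mem hac _ (right_mem_Icc.2 hac)]; exact u.2.2
  have hkey : ∀ u : P, ContinuousOn (RBop S L b h (IccExtend hac ⇑u.1)) (Icc (X 0) (X N)) ∧
      ∀ j ≤ N, RBop S L b h (IccExtend hac ⇑u.1) (X j) = Y j := fun u =>
    part1 _ (hext u).1 (hext u).2.1 (hext u).2.2
  let Φ : P → P := fun u =>
    ⟨⟨fun z => RBop S L b h (IccExtend hac ⇑u.1) ↑z, (hkey u).1.restrict⟩,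
      (hkey u).2 0 (Nat.zero_le N), (hkey u).2 N le_rfl⟩
  have hlip : ∀ u v : P, dist (Φ u) (Φ v) ≤ s * dist u v := by
    intro u v
    rw [Subtype.dist_eq, Subtype.dist_eq]
    rw [ContinuousMap.dist_le (mul_nonneg hs0 (dist_nonneg))]
    intro z
    have hLz : L ↑z ∈ Icc (X 0) (X N) := hLI z.2
    have h1 : (Φ u).1 z - (Φ v).1 z
        = S ↑z * (u.1 ⟨L ↑z, hLz⟩ - v.1 ⟨L ↑z, hLz⟩) := by
      show RBop S L b h (IccExtend hac ⇑u.1) ↑z - RBop S L b h (IccExtend hac ⇑v.1) ↑z = _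
      simp only [RBop, IccExtend_of_mem hac _ hLz]
      ring
    rw [Real.dist_eq, h1, abs_mul]
    have h2 : |u.1 ⟨L ↑z, hLz⟩ - v.1 ⟨L ↑z, hLz⟩| ≤ dist u.1 v.1 := by
      rw [← Real.dist_eq]
      exact ContinuousMap.dist_apply_le_dist _
    exact mul_le_mul (hS.2 ⟨↑z, z.2, rfl⟩) h2 (abs_nonneg _) hs0
  have hcontr : ContractingWith ⟨s, hs0⟩ Φ := by
    constructor
    · exact hs1
    · exact LipschitzWith.of_dist_le_mul hlip
  set u₀ := ContractingWith.fixedPoint Φ hcontr with hu₀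
  have hfix : Φ u₀ = u₀ := hcontr.fixedPoint_isFixedPt
  set f : ℝ → ℝ := IccExtend hac ⇑u₀.1 with hf
  have hfC : ContinuousOn f (Icc (X 0) (X N)) := (hext u₀).1
  have hf0 : f (X 0) = Y 0 := (hext u₀).2.1
  have hfN : f (X N) = Y N := (hext u₀).2.2
  have hfixed : ∀ x ∈ Icc (X 0) (X N), RBop S L b h f x = f x := by
    intro x hx
    have h1 : (Φ u₀).1 ⟨x, hx⟩ = u₀.1 ⟨x, hx⟩ := by rw [hfix]
    calc RBop S L b h f x = (Φ u₀).1 ⟨x, hx⟩ := rfl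
      _ = u₀.1 ⟨x, hx⟩ := h1
      _ = f x := (IccExtend_of_mem hac _ hx).symm
  have hinterp : ∀ j ≤ N, f (X j) = Y j := by
    intro j hj
    rw [← hfixed (X j) (hXmem j hj)]
    exact (part1 f hfC hf0 hfN).2 j hj
  refine ⟨f, ⟨hfC, hinterp, hfixed⟩, ?_⟩
  intro g hgC hg0 hgN hgfix
  have hcon2 := part2 g f hgC hg0 hgN hfC hf0 hfN
  have himg : (fun x => |RBop S L b h g x - RBop S L b h f x|) '' Icc (X 0) (X N)
      = (fun x => |g x - f x|) '' Icc (X 0) (X N) :=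
    image_congr (fun x hx => by rw [hgfix x hx, hfixed x hx])
  have hd : dInf (X 0) (X N) g f ≤ s * dInf (X 0) (X N) g f := by
    have : dInf (X 0) (X N) (RBop S L b h g) (RBop S L b h f) = dInf (X 0) (X N) g f := by
      simp only [dInf]; rw [himg]
    rwa [this] at hcon2
  have hbdd : BddAbove ((fun x => |g x - f x|) '' Icc (X 0) (X N)) :=
    (isCompact_Icc.image_of_continuousOn ((hgC.sub hfC).abs)).bddAbove
  have hd0 : 0 ≤ dInf (X 0) (X N) g f :=
    le_trans (abs_nonneg _) (le_csSup hbdd ⟨X 0, left_mem_Icc.2 hac, rfl⟩)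
  have hdz : dInf (X 0) (X N) g f = 0 := by nlinarith
  intro x hx
  have h1 : |g x - f x| ≤ dInf (X 0) (X N) g f := le_csSup hbdd ⟨x, hx, rfl⟩
  rw [hdz] at h1
  exact sub_eq_zero.mp (abs_nonpos_iff.mp h1)
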